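/- For a reversible lazy random walk X̃ on a finite connected weighted graph (G,μ) with invariant distribution π, for every vertex x and all t ≥ 1: ‖P̃_t(x,·) − π‖_TV² ≤ (1/(8t)) · max_z E_z[τ̃_x], where τ̃_x is the hitting time of x by the lazy walk. -/

import Mathlib

open scoped BigOperators

lemma aux_step (a : ℕ → ℝ) (h1 : ∀ s, 0 < a s) (h2 : ∀ s, a s ≤ 1)
    (h3 : ∀ s, a (s+1)^2 ≤ a s * a (s+2)) : ∀ s, a (s+1) ≤ a s := by
  by_contra h
  push_neg at h
  obtain ⟨s, hs⟩ := h
  set r : ℝ := a (s+1) / a s with hr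
  have has := h1 s
  have hr1 : 1 < r := (one_lt_div has).2 hs
  have key : ∀ k, r * a (s+k) ≤ a (s+k+1) := by
    intro k
    induction k with
    | zero => simp [hr, div_mul_cancel₀ _ (ne_of_gt has)]
    | succ k ih =>
        have h3k := h3 (s+k)
        have hk1 := h1 (s+k)
        have hk2 := h1 (s+k+1)
        have heq : s + (k+1) = s + k + 1 := by ring
        rw [show s + (k+1) + 1 = s + k + 2 by ring, heq]
        nlinarith [ih, h3k, hk1, hk2]
  have key2 : ∀ k, a s * r ^ k ≤ a (s+k) := by
    intro k
    induction k with
    | zero => simp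
    | succ k ih =>
        have := key k
        have hrpos : (0:ℝ) < r := lt_trans one_pos hr1
        calc a s * r ^ (k+1) = r * (a s * r ^ k) := by ring
        _ ≤ r * a (s+k) := by nlinarith [pow_pos hrpos k]
        _ ≤ a (s+k+1) := key k
  obtain ⟨k, hk⟩ := pow_unbounded_of_one_lt (1 / a s) hr1
  have := key2 k
  have h2k := h2 (s+k)
  have : a s * r ^ k > a s * (1 / a s) := by
    apply mul_lt_mul_of_pos_left hk has
  rw [mul_one_div, div_self (ne_of_gt has)] at this
  linarith [key2 k, h2 (s+k)]

lemma aux_mono (a : ℕ → ℝ) (h1 : ∀ s, 0 < a s) (h2 : ∀ s, a s ≤ 1)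
    (h3 : ∀ s, a (s+1)^2 ≤ a s * a (s+2)) : ∀ m n, m ≤ n → a n ≤ a m := by
  intro m n hmn
  induction n, hmn using Nat.le_induction with
  | base => exact le_refl _
  | succ n hmn ih => exact le_trans (aux_step a h1 h2 h3 n) ih

set_option maxHeartbeats 2000000 in
/-- For the reversible lazy random walk on a finite connected weighted graph, with
invariant distribution `π` and expected hitting times `hitL z x = E_z[τ̃_x]`,
`‖P̃_t(x,·) − π‖_TV² ≤ (1/(8t)) max_z E_z[τ̃_x]` for all `t ≥ 1`. -/
theorem stmt10 {V : Type*} [Fintype V] [DecidableEq V] [Nonempty V]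
    (μ : V → V → ℝ) (hμsymm : ∀ x y, μ x y = μ y x) (hμnn : ∀ x y, 0 ≤ μ x y)
    (hloop : ∀ x, μ x x = 0) (hdeg : ∀ x, 0 < ∑ y, μ x y)
    -- lazy transition matrix
    (Ptil : V → V → ℝ)
    (hPtil : ∀ x y, Ptil x y = if x = y then 1 / 2 else μ x y / (2 * ∑ w, μ x w))
    -- t-step kernel
    (Pt : ℕ → V → V → ℝ)
    (hPt0 : ∀ x y, Pt 0 x y = if x = y then 1 else 0)
    (hPtsucc : ∀ n x y, Pt (n + 1) x y = ∑ z, Pt n x z * Ptil z y)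
    -- connectivity (irreducibility)
    (hconn : ∀ x y, ∃ n, 0 < Pt n x y)
    -- invariant distribution
    (π : V → ℝ) (hπ : ∀ y, π y = (∑ w, μ y w) / ∑ x, ∑ w, μ x w)
    -- expected hitting times of the lazy walk
    (hitL : V → V → ℝ) (hhitnn : ∀ z x, 0 ≤ hitL z x)
    (hhit0 : ∀ x, hitL x x = 0)
    (hhit : ∀ z x, z ≠ x → hitL z x = 1 + ∑ y, Ptil z y * hitL y x) :
    ∀ (x : V) (t : ℕ), 1 ≤ t →
      ((1 / 2) * ∑ y, |Pt t x y - π y|) ^ 2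
        ≤ (1 / (8 * t)) * Finset.univ.sup' Finset.univ_nonempty (fun z => hitL z x) := by
  intro x t ht
  set W : ℝ := ∑ x, ∑ w, μ x w with hWdef
  have hWpos : (0:ℝ) < W := Finset.sum_pos (fun i _ => hdeg i) Finset.univ_nonempty
  have hπpos : ∀ y, 0 < π y := fun y => by rw [hπ]; exact div_pos (hdeg y) hWpos
  have hπsum : ∑ y, π y = 1 := by
    simp only [hπ]; rw [← Finset.sum_div]; exact div_self hWpos.ne'
  have hPtil' : ∀ z y, Ptil z y = (if z = y then 1/2 else 0) + μ z y / (2 * ∑ w, μ z w) := by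
    intro z y
    rw [hPtil]
    by_cases h : z = y
    · subst h; simp [hloop]
    · simp [h]
  have hPtilnn : ∀ z y, 0 ≤ Ptil z y := by
    intro z y; rw [hPtil']
    have h := hdeg z
    apply add_nonneg
    · split <;> norm_num
    · exact div_nonneg (hμnn z y) (by nlinarith [hdeg z])
  have hPtilrow : ∀ z, ∑ y, Ptil z y = 1 := by
    intro z
    simp only [hPtil']
    rw [Finset.sum_add_distrib, Finset.sum_ite_eq, ← Finset.sum_div, if_pos (Finset.mem_univ z)]
    have h := (hdeg z).ne'
    field_simp
    ring
  have hrev1 : ∀ y z, π y * Ptil y z = π z * Ptil z y := by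
    intro y z
    by_cases h : y = z
    · subst h; rfl
    · rw [hPtil, hPtil, hπ, hπ, if_neg h, if_neg (Ne.symm h), hμsymm y z]
      have h1 := (hdeg y).ne'
      have h2 := (hdeg z).ne'
      field_simp
  have hkey : ∀ y z, π y * Ptil y z
      = (if y = z then π y / 2 else 0) + μ y z / (2 * W) := by
    intro y z
    rw [hPtil', hπ]
    have h1 := (hdeg y).ne'
    have h2 := hWpos.ne'
    by_cases h : y = z
    · subst h; rw [if_pos rfl, if_pos rfl]
      simp only [hloop]
      field_simp
    · rw [if_neg h, if_neg h]
      field_simp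
      ring
  have hPtilxx : ∀ z, Ptil z z = 1/2 := fun z => by rw [hPtil]; simp
  have hPtnn : ∀ n y z, 0 ≤ Pt n y z := by
    intro n
    induction n with
    | zero => intro y z; rw [hPt0]; split <;> norm_num
    | succ n ih =>
        intro y z; rw [hPtsucc]
        exact Finset.sum_nonneg fun w _ => mul_nonneg (ih y w) (hPtilnn w z)
  have hPtrow : ∀ n y, ∑ z, Pt n y z = 1 := by
    intro n
    induction n with
    | zero => intro y; simp [hPt0]
    | succ n ih =>
        intro y
        simp only [hPtsucc]
        rw [Finset.sum_comm]
        calc ∑ w, ∑ z, Pt n y w * Ptil w z = ∑ w, Pt n y w * ∑ z, Ptil w z := by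
              simp [Finset.mul_sum]
        _ = 1 := by simp [hPtilrow, ih]
  have hCh : ∀ m n y z, Pt (m + n) y z = ∑ w, Pt m y w * Pt n w z := by
    intro m n
    induction n with
    | zero =>
        intro y z
        simp only [Nat.add_zero, hPt0]
        rw [Finset.sum_congr rfl (fun w _ => by rw [mul_ite, mul_one, mul_zero]),
          Finset.sum_ite_eq' Finset.univ z (fun w => Pt m y w)]
        simp
    | succ n ih =>
        intro y z
        rw [show m + (n+1) = (m+n) + 1 by ring, hPtsucc]
        simp only [ih, hPtsucc, Finset.sum_mul, Finset.mul_sum]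
        rw [Finset.sum_comm]
        apply Finset.sum_congr rfl; intro a _
        apply Finset.sum_congr rfl; intro b _
        ring
  have hPt1 : ∀ y z, Pt 1 y z = Ptil y z := by
    intro y z
    rw [show (1:ℕ) = 0 + 1 from rfl, hPtsucc]
    simp only [hPt0]
    rw [Finset.sum_congr rfl (fun w _ => by rw [ite_mul, one_mul, zero_mul]),
      Finset.sum_ite_eq Finset.univ y (fun w => Ptil w z)]
    simp
  have hrev : ∀ n y z, π y * Pt n y z = π z * Pt n z y := by
    intro n
    induction n with
    | zero =>
        intro y z
        rw [hPt0, hPt0]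
        by_cases h : y = z
        · subst h; rfl
        · rw [if_neg h, if_neg (Ne.symm h)]; ring
    | succ n ih =>
        intro y z
        rw [hPtsucc, show n + 1 = 1 + n by ring, hCh 1 n]
        simp only [hPt1]
        rw [Finset.mul_sum, Finset.mul_sum]
        apply Finset.sum_congr rfl; intro w _
        calc π y * (Pt n y w * Ptil w z) = (π y * Pt n y w) * Ptil w z := by ring
        _ = (π w * Pt n w y) * Ptil w z := by rw [ih]
        _ = (π w * Ptil w z) * Pt n w y := by ring
        _ = (π z * Ptil z w) * Pt n w y := by rw [hrev1]
        _ = π z * (Ptil z w * Pt n w y) := by ring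
  have hcol : ∀ n z, ∑ y, π y * Pt n y z = π z := by
    intro n z
    calc ∑ y, π y * Pt n y z = ∑ y, π z * Pt n z y := by
          exact Finset.sum_congr rfl fun y _ => hrev n y z
    _ = π z := by rw [← Finset.mul_sum, hPtrow, mul_one]
  -- diagonal bounds
  have haub : ∀ s (x : V), Pt s x x ≤ 1 := by
    intro s x
    calc Pt s x x ≤ ∑ z, Pt s x z :=
          Finset.single_le_sum (fun z _ => hPtnn s x z) (Finset.mem_univ x)
    _ = 1 := hPtrow s x
  have hapos : ∀ s (x : V), 0 < Pt s x x := by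
    intro s x
    induction s with
    | zero => simp [hPt0]
    | succ s ih =>
        rw [hPtsucc]
        have h1 : Pt s x x * Ptil x x ≤ ∑ z, Pt s x z * Ptil z x :=
          Finset.single_le_sum (fun z _ => mul_nonneg (hPtnn s x z) (hPtilnn z x))
            (Finset.mem_univ x)
        have := hPtilxx x
        nlinarith
  -- base PSD
  have hQ1 : ∀ u : V → ℝ, 0 ≤ ∑ y, ∑ z, (π y * Ptil y z) * u y * u z := by
    intro u
    set S1 : ℝ := ∑ y, π y * u y ^ 2 with hS1
    set A : ℝ := ∑ y, ∑ z, μ y z * u y * u z with hA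
    have e1 : ∑ y, ∑ z, (π y * Ptil y z) * u y * u z = S1 / 2 + A / (2 * W) := by
      simp only [hkey]
      have term : ∀ y z : V, ((if y = z then π y / 2 else 0) + μ y z / (2 * W)) * u y * u z
          = (if y = z then (π y / 2) * u y * u z else 0) + (μ y z * u y * u z) / (2 * W) := by
        intro y z; split <;> ring
      simp only [term, Finset.sum_add_distrib]
      congr 1
      · rw [Finset.sum_congr rfl (fun y _ => Finset.sum_ite_eq Finset.univ y
          (fun z => (π y / 2) * u y * u z))]
        simp only [Finset.mem_univ, if_true]
        rw [hS1, Finset.sum_div]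
        exact Finset.sum_congr rfl fun y _ => by ring
      · rw [hA, Finset.sum_div]
        exact Finset.sum_congr rfl fun y _ => by rw [Finset.sum_div]
    have e2 : ∑ y, ∑ z, μ y z * u z ^ 2 = ∑ y, ∑ z, μ y z * u y ^ 2 := by
      rw [Finset.sum_comm]
      exact Finset.sum_congr rfl fun a _ => Finset.sum_congr rfl fun b _ => by
        rw [hμsymm]
    have e3 : ∑ y, ∑ z, μ y z * u y ^ 2 = W * S1 := by
      rw [hS1, Finset.mul_sum]
      apply Finset.sum_congr rfl
      intro y _
      rw [← Finset.sum_mul, hπ]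
      field_simp
    have e4 : (0:ℝ) ≤ ∑ y, ∑ z, μ y z * (u y + u z) ^ 2 :=
      Finset.sum_nonneg fun y _ => Finset.sum_nonneg fun z _ =>
        mul_nonneg (hμnn y z) (sq_nonneg _)
    have e5 : ∑ y, ∑ z, μ y z * (u y + u z) ^ 2
        = (∑ y, ∑ z, μ y z * u y ^ 2) + 2 * A + ∑ y, ∑ z, μ y z * u z ^ 2 := by
      rw [hA, Finset.mul_sum, ← Finset.sum_add_distrib, ← Finset.sum_add_distrib]
      apply Finset.sum_congr rfl; intro y _
      rw [Finset.mul_sum, ← Finset.sum_add_distrib, ← Finset.sum_add_distrib]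
      apply Finset.sum_congr rfl; intro z _
      ring
    rw [e1]
    have h6 : 0 ≤ 2 * W * S1 + 2 * A := by
      have := e5; rw [e2, e3] at this; linarith [e4]
    have h7 : S1 / 2 + A / (2 * W) = (2 * W * S1 + 2 * A) / (4 * W) := by
      field_simp
      ring
    rw [h7]
    positivity
  -- rearrangement: even case
  have hQeven : ∀ (k : ℕ) (u w : V → ℝ),
      ∑ a, (π a * (∑ y, Pt k a y * u y)) * (∑ z, Pt k a z * w z)
        = ∑ y, ∑ z, (π y * Pt (k + k) y z) * u y * w z := by
    intro k u w
    have step1 : ∀ a : V, (π a * (∑ y, Pt k a y * u y)) * (∑ z, Pt k a z * w z)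
        = ∑ z, ∑ y, (π y * Pt k y a) * Pt k a z * u y * w z := by
      intro a
      conv_lhs => rw [Finset.mul_sum]
      apply Finset.sum_congr rfl; intro z _
      conv_lhs => rw [Finset.mul_sum, Finset.sum_mul]
      apply Finset.sum_congr rfl; intro y _
      linear_combination u y * Pt k a z * w z * hrev k a y
    calc ∑ a, (π a * (∑ y, Pt k a y * u y)) * (∑ z, Pt k a z * w z)
        = ∑ a, ∑ z, ∑ y, (π y * Pt k y a) * Pt k a z * u y * w z :=
          Finset.sum_congr rfl fun a _ => step1 a
      _ = ∑ z, ∑ a, ∑ y, (π y * Pt k y a) * Pt k a z * u y * w z := Finset.sum_comm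
      _ = ∑ z, ∑ y, ∑ a, (π y * Pt k y a) * Pt k a z * u y * w z :=
          Finset.sum_congr rfl fun z _ => Finset.sum_comm
      _ = ∑ y, ∑ z, ∑ a, (π y * Pt k y a) * Pt k a z * u y * w z := Finset.sum_comm
      _ = ∑ y, ∑ z, (π y * Pt (k + k) y z) * u y * w z := by
          apply Finset.sum_congr rfl; intro y _
          apply Finset.sum_congr rfl; intro z _
          calc ∑ a, (π y * Pt k y a) * Pt k a z * u y * w z
              = (∑ a, Pt k y a * Pt k a z) * (π y * u y * w z) := by
                rw [Finset.sum_mul]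
                exact Finset.sum_congr rfl fun a _ => by ring
            _ = Pt (k + k) y z * (π y * u y * w z) := by rw [← hCh k k y z]
            _ = (π y * Pt (k + k) y z) * u y * w z := by ring
  -- rearrangement: odd case
  have hQodd : ∀ (k : ℕ) (u w : V → ℝ),
      ∑ a, ∑ b, (π a * Ptil a b) * (∑ y, Pt k a y * u y) * (∑ z, Pt k b z * w z)
        = ∑ y, ∑ z, (π y * Pt (k + k + 1) y z) * u y * w z := by
    intro k u w
    have step1 : ∀ a b : V, (π a * Ptil a b) * (∑ y, Pt k a y * u y) * (∑ z, Pt k b z * w z)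
        = ∑ z, ∑ y, ((π y * Pt k y a) * Ptil a b * Pt k b z) * u y * w z := by
      intro a b
      conv_lhs => rw [Finset.mul_sum]
      apply Finset.sum_congr rfl; intro z _
      conv_lhs => rw [Finset.mul_sum, Finset.sum_mul]
      apply Finset.sum_congr rfl; intro y _
      linear_combination Ptil a b * Pt k b z * u y * w z * hrev k a y
    calc ∑ a, ∑ b, (π a * Ptil a b) * (∑ y, Pt k a y * u y) * (∑ z, Pt k b z * w z)
        = ∑ a, ∑ b, ∑ z, ∑ y, ((π y * Pt k y a) * Ptil a b * Pt k b z) * u y * w z :=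
          Finset.sum_congr rfl fun a _ => Finset.sum_congr rfl fun b _ => step1 a b
      _ = ∑ a, ∑ z, ∑ b, ∑ y, ((π y * Pt k y a) * Ptil a b * Pt k b z) * u y * w z :=
          Finset.sum_congr rfl fun a _ => Finset.sum_comm
      _ = ∑ z, ∑ a, ∑ b, ∑ y, ((π y * Pt k y a) * Ptil a b * Pt k b z) * u y * w z :=
          Finset.sum_comm
      _ = ∑ z, ∑ a, ∑ y, ∑ b, ((π y * Pt k y a) * Ptil a b * Pt k b z) * u y * w z :=
          Finset.sum_congr rfl fun z _ => Finset.sum_congr rfl fun a _ => Finset.sum_comm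
      _ = ∑ z, ∑ y, ∑ a, ∑ b, ((π y * Pt k y a) * Ptil a b * Pt k b z) * u y * w z :=
          Finset.sum_congr rfl fun z _ => Finset.sum_comm
      _ = ∑ y, ∑ z, ∑ a, ∑ b, ((π y * Pt k y a) * Ptil a b * Pt k b z) * u y * w z :=
          Finset.sum_comm
      _ = ∑ y, ∑ z, (π y * Pt (k + k + 1) y z) * u y * w z := by
          apply Finset.sum_congr rfl; intro y _
          apply Finset.sum_congr rfl; intro z _
          have hdecomp : Pt (k + k + 1) y z = ∑ a, Pt k y a * ∑ b, Ptil a b * Pt k b z := by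
            rw [show k + k + 1 = k + (1 + k) by ring, hCh k (1+k) y z]
            apply Finset.sum_congr rfl; intro a _
            rw [hCh 1 k a z]
            congr 1
            exact Finset.sum_congr rfl fun b _ => by rw [hPt1]
          calc ∑ a, ∑ b, ((π y * Pt k y a) * Ptil a b * Pt k b z) * u y * w z
              = ∑ a, (Pt k y a * ∑ b, Ptil a b * Pt k b z) * (π y * u y * w z) := by
                apply Finset.sum_congr rfl; intro a _
                conv_rhs => rw [Finset.mul_sum, Finset.sum_mul]
                exact Finset.sum_congr rfl fun b _ => by ring
            _ = (∑ a, Pt k y a * ∑ b, Ptil a b * Pt k b z) * (π y * u y * w z) :=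
                (Finset.sum_mul _ _ _).symm
            _ = Pt (k + k + 1) y z * (π y * u y * w z) := by rw [← hdecomp]
            _ = (π y * Pt (k + k + 1) y z) * u y * w z := by ring
  -- PSD for all powers
  have hQpos : ∀ (s : ℕ) (u : V → ℝ), 0 ≤ ∑ y, ∑ z, (π y * Pt s y z) * u y * u z := by
    intro s u
    rcases Nat.even_or_odd s with ⟨k, hk⟩ | ⟨k, hk⟩
    · rw [hk, ← hQeven k u u]
      apply Finset.sum_nonneg; intro a _
      have : (π a * (∑ y, Pt k a y * u y)) * (∑ z, Pt k a z * u z)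
          = π a * (∑ y, Pt k a y * u y) ^ 2 := by ring
      rw [this]
      exact mul_nonneg (hπpos a).le (sq_nonneg _)
    · rw [show s = k + k + 1 by omega, ← hQodd k u u]
      exact hQ1 (fun y => ∑ z, Pt k y z * u z)
  have hlc : ∀ s, Pt (s+1) x x ^ 2 ≤ Pt s x x * Pt (s+2) x x := by
    intro s
    set A : V → ℝ := fun y => if y = x then 1 else 0 with hA
    set B : V → ℝ := fun y => Ptil y x with hB
    set quu : ℝ := ∑ y, ∑ z, (π y * Pt s y z) * A y * A z with hquu
    set quv : ℝ := ∑ y, ∑ z, (π y * Pt s y z) * A y * B z with hquv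
    set qvu : ℝ := ∑ y, ∑ z, (π y * Pt s y z) * B y * A z with hqvu
    set qvv : ℝ := ∑ y, ∑ z, (π y * Pt s y z) * B y * B z with hqvv
    have q1 : quu = π x * Pt s x x := by
      rw [hquu]
      have inner1 : ∀ y, ∑ z, (π y * Pt s y z) * A y * A z = (π y * Pt s y x) * A y := by
        intro y
        rw [Finset.sum_congr rfl (fun z _ =>
          show (π y * Pt s y z) * A y * A z
            = if z = x then (π y * Pt s y x) * A y else 0 from by
          by_cases h : z = x
          · subst h; simp [hA]
          · simp [hA, h]),
          Finset.sum_ite_eq' Finset.univ x (fun _ => (π y * Pt s y x) * A y)]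
        simp
      rw [Finset.sum_congr rfl fun y _ => inner1 y]
      rw [Finset.sum_congr rfl (fun y _ =>
        show (π y * Pt s y x) * A y = if y = x then π x * Pt s x x else 0 from by
          by_cases h : y = x
          · subst h; simp [hA]
          · simp [hA, h]),
        Finset.sum_ite_eq' Finset.univ x (fun _ => π x * Pt s x x)]
      simp
    have q2 : quv = π x * Pt (s+1) x x := by
      rw [hquv]
      rw [Finset.sum_congr rfl (fun y _ =>
        show ∑ z, (π y * Pt s y z) * A y * B z
          = if y = x then ∑ z, (π x * Pt s x z) * Ptil z x else 0 from by
        by_cases h : y = x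
        · subst h; simp only [if_pos rfl]
          exact Finset.sum_congr rfl fun z _ => by simp [hA, hB]
        · simp only [if_neg h]
          apply Finset.sum_eq_zero; intro z _; simp [hA, h]),
        Finset.sum_ite_eq' Finset.univ x (fun _ => ∑ z, (π x * Pt s x z) * Ptil z x)]
      simp only [Finset.mem_univ, if_true]
      rw [hPtsucc s x x, Finset.mul_sum]
      exact Finset.sum_congr rfl fun z _ => by ring
    have q3 : qvv = π x * Pt (s+2) x x := by
      rw [hqvv]
      have inner3 : ∀ y, ∑ z, (π y * Pt s y z) * B y * B z
          = Ptil x y * Pt (s+1) y x * π x := by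
        intro y
        calc ∑ z, (π y * Pt s y z) * B y * B z
            = ∑ z, (Ptil x y * π x) * (Pt s y z * Ptil z x) := by
              apply Finset.sum_congr rfl; intro z _
              simp only [hB]
              linear_combination Pt s y z * Ptil z x * hrev1 y x
          _ = (Ptil x y * π x) * ∑ z, Pt s y z * Ptil z x := (Finset.mul_sum _ _ _).symm
          _ = (Ptil x y * π x) * Pt (s+1) y x := by rw [← hPtsucc s y x]
          _ = Ptil x y * Pt (s+1) y x * π x := by ring
      rw [Finset.sum_congr rfl fun y _ => inner3 y]
      calc ∑ y, Ptil x y * Pt (s+1) y x * π x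
          = (∑ y, Pt 1 x y * Pt (s+1) y x) * π x := by
            rw [Finset.sum_mul]
            exact Finset.sum_congr rfl fun y _ => by rw [hPt1]
        _ = Pt (1 + (s+1)) x x * π x := by rw [← hCh 1 (s+1) x x]
        _ = π x * Pt (s+2) x x := by rw [show 1 + (s+1) = s + 2 by ring]; ring
    have qsym : quv = qvu := by
      rw [hquv, hqvu]
      calc ∑ y, ∑ z, (π y * Pt s y z) * A y * B z
          = ∑ y, ∑ z, (π z * Pt s z y) * A y * B z := by
            apply Finset.sum_congr rfl; intro y _
            apply Finset.sum_congr rfl; intro z _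
            linear_combination A y * B z * hrev s y z
        _ = ∑ z, ∑ y, (π z * Pt s z y) * A y * B z := Finset.sum_comm
        _ = ∑ y, ∑ z, (π y * Pt s y z) * B y * A z := by
            apply Finset.sum_congr rfl; intro a _
            apply Finset.sum_congr rfl; intro b _
            ring
    have expand : ∀ c : ℝ, ∑ y, ∑ z, (π y * Pt s y z) * (A y + c * B y) * (A z + c * B z)
        = quu + c * quv + c * qvu + c^2 * qvv := by
      intro c
      have tm : ∀ y z : V, (π y * Pt s y z) * (A y + c * B y) * (A z + c * B z)
          = (π y * Pt s y z) * A y * A z + c * ((π y * Pt s y z) * A y * B z)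
            + c * ((π y * Pt s y z) * B y * A z) + c^2 * ((π y * Pt s y z) * B y * B z) :=
        fun y z => by ring
      simp only [tm, Finset.sum_add_distrib, ← Finset.mul_sum]
      rw [hquu, hquv, hqvu, hqvv]
    have quadratic : ∀ c : ℝ, 0 ≤ qvv * c^2 + (2 * quv) * c + quu := by
      intro c
      have h : 0 ≤ ∑ y, ∑ z, (π y * Pt s y z) * (A y + c * B y) * (A z + c * B z) :=
        hQpos s (fun y => A y + c * B y)
      rw [expand c] at h
      rw [← qsym] at h
      linarith
    have hq : ∀ c : ℝ, 0 ≤ qvv * (c * c) + (2 * quv) * c + quu := by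
      intro c; nlinarith [quadratic c]
    have hd := discrim_le_zero hq
    rw [discrim] at hd
    have hp := hπpos x
    have e : quv ^ 2 ≤ quu * qvv := by nlinarith [hd]
    rw [q1, q2, q3] at e
    nlinarith [e, hp, mul_pos hp hp]
  have hmono : ∀ m n : ℕ, m ≤ n → Pt n x x ≤ Pt m x x :=
    aux_mono (fun s => Pt s x x) (fun s => hapos s x) (fun s => haub s x) hlc
  set M : ℝ := Finset.univ.sup' Finset.univ_nonempty (fun z => hitL z x) with hM
  set g : ℕ → ℝ := fun n => ∑ z, Pt n x z * hitL z x with hg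
  -- Kac-type identity at x
  have hswap : ∑ y, π y * ∑ z, Ptil y z * hitL z x = ∑ z, π z * hitL z x := by
    calc ∑ y, π y * ∑ z, Ptil y z * hitL z x
        = ∑ y, ∑ z, (π y * Ptil y z) * hitL z x := by
          apply Finset.sum_congr rfl; intro y _
          rw [Finset.mul_sum]
          exact Finset.sum_congr rfl fun z _ => by ring
      _ = ∑ z, ∑ y, (π y * Ptil y z) * hitL z x := Finset.sum_comm
      _ = ∑ z, π z * hitL z x := by
          apply Finset.sum_congr rfl; intro z _
          rw [← Finset.sum_mul]
          congr 1
          calc ∑ y, π y * Ptil y z = ∑ y, π z * Ptil z y :=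
                Finset.sum_congr rfl fun y _ => hrev1 y z
            _ = π z * ∑ y, Ptil z y := (Finset.mul_sum _ _ _).symm
            _ = π z := by rw [hPtilrow, mul_one]
  have hzero : ∑ y, π y * (hitL y x - ∑ z, Ptil y z * hitL z x) = 0 := by
    simp only [mul_sub]
    rw [Finset.sum_sub_distrib, hswap]
    exact sub_self _
  have hAfx : π x * (∑ z, Ptil x z * hitL z x) = 1 - π x := by
    have hsplit := Finset.add_sum_erase Finset.univ
      (fun y => π y * (hitL y x - ∑ z, Ptil y z * hitL z x)) (Finset.mem_univ x)
    have herase : ∑ y ∈ Finset.univ.erase x, π y * (hitL y x - ∑ z, Ptil y z * hitL z x)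
        = ∑ y ∈ Finset.univ.erase x, π y := by
      apply Finset.sum_congr rfl; intro y hy
      have hyx : y ≠ x := Finset.ne_of_mem_erase hy
      rw [hhit y x hyx]
      ring
    have hese : ∑ y ∈ Finset.univ.erase x, π y = 1 - π x := by
      rw [Finset.sum_erase_eq_sub (Finset.mem_univ x), hπsum]
    rw [herase, hese, hzero] at hsplit
    simp only [hhit0] at hsplit
    linarith [hsplit]
  -- per-state identity
  have hAf : ∀ w, π x * (hitL w x - ∑ z, Ptil w z * hitL z x)
      = π x - (if w = x then 1 else 0) := by
    intro w
    by_cases h : w = x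
    · subst h; rw [hhit0, if_pos rfl]; linarith [hAfx]
    · rw [hhit w x h, if_neg h]; ring
  -- telescoping step
  have hgstep : ∀ s : ℕ, Pt s x x - π x = π x * (g (s+1) - g s) := by
    intro s
    have hgs1 : g (s+1) = ∑ w, Pt s x w * ∑ z, Ptil w z * hitL z x := by
      rw [hg]
      calc ∑ z, Pt (s+1) x z * hitL z x
          = ∑ z, ∑ w, (Pt s x w * Ptil w z) * hitL z x := by
            apply Finset.sum_congr rfl; intro z _
            rw [hPtsucc, Finset.sum_mul]
        _ = ∑ w, ∑ z, (Pt s x w * Ptil w z) * hitL z x := Finset.sum_comm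
        _ = ∑ w, Pt s x w * ∑ z, Ptil w z * hitL z x := by
            apply Finset.sum_congr rfl; intro w _
            rw [Finset.mul_sum]
            exact Finset.sum_congr rfl fun z _ => by ring
    have hkeystep : π x * (g s - g (s+1)) = π x - Pt s x x := by
      calc π x * (g s - g (s+1))
          = ∑ w, Pt s x w * (π x * (hitL w x - ∑ z, Ptil w z * hitL z x)) := by
            rw [hgs1, hg]
            simp only []
            rw [← Finset.sum_sub_distrib, Finset.mul_sum]
            apply Finset.sum_congr rfl; intro w _
            ring
        _ = ∑ w, Pt s x w * (π x - (if w = x then 1 else 0)) := by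
            exact Finset.sum_congr rfl fun w _ => by rw [hAf w]
        _ = π x * (∑ w, Pt s x w) - ∑ w, (if w = x then Pt s x w else 0) := by
            simp only [mul_sub, mul_ite, mul_one, mul_zero]
            rw [Finset.sum_sub_distrib, Finset.mul_sum]
            congr 1
            exact Finset.sum_congr rfl fun w _ => by ring
        _ = π x - Pt s x x := by
            rw [hPtrow s x, mul_one, Finset.sum_ite_eq' Finset.univ x (fun w => Pt s x w)]
            simp
    linarith [hkeystep]
  have hg0 : g 0 = 0 := by
    rw [hg]
    simp only []
    rw [Finset.sum_congr rfl (fun z _ => by rw [hPt0] :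
      ∀ z ∈ Finset.univ, Pt 0 x z * hitL z x = (if x = z then 1 else 0) * hitL z x)]
    rw [Finset.sum_congr rfl (fun z _ => by split <;> ring :
      ∀ z ∈ Finset.univ, (if x = z then (1:ℝ) else 0) * hitL z x
        = if x = z then hitL z x else 0)]
    rw [Finset.sum_ite_eq Finset.univ x (fun z => hitL z x)]
    simp [hhit0]
  have hgtel : ∀ n : ℕ, ∑ s ∈ Finset.range n, (Pt s x x - π x) = π x * g n := by
    intro n
    induction n with
    | zero => simp [hg0]
    | succ n ih =>
        rw [Finset.sum_range_succ, ih, hgstep n]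
        ring
  have hgle : ∀ n, g n ≤ M := by
    intro n
    rw [hg]
    calc ∑ z, Pt n x z * hitL z x ≤ ∑ z, Pt n x z * M := by
          apply Finset.sum_le_sum; intro z _
          exact mul_le_mul_of_nonneg_left (Finset.le_sup' (fun z => hitL z x)
            (Finset.mem_univ z)) (hPtnn n x z)
    _ = M := by rw [← Finset.sum_mul, hPtrow, one_mul]
  -- Cauchy–Schwarz / chi-square bound
  have hπx := hπpos x
  have hsq : (∑ y, |Pt t x y - π y|) ^ 2 ≤ Pt (t+t) x x / π x - 1 := by
    have cs := Finset.sum_mul_sq_le_sq_mul_sq Finset.univ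
      (fun y => Real.sqrt (π y)) (fun y => |Pt t x y - π y| / Real.sqrt (π y))
    have hf : ∀ y ∈ Finset.univ, Real.sqrt (π y) * (|Pt t x y - π y| / Real.sqrt (π y))
        = |Pt t x y - π y| := by
      intro y _
      rw [mul_comm, div_mul_cancel₀ _ (Real.sqrt_pos.mpr (hπpos y)).ne']
    rw [Finset.sum_congr rfl hf] at cs
    have hs1 : ∑ y, Real.sqrt (π y) ^ 2 = 1 := by
      rw [Finset.sum_congr rfl fun y _ => Real.sq_sqrt (hπpos y).le, hπsum]
    have hs2 : ∀ y ∈ Finset.univ, (|Pt t x y - π y| / Real.sqrt (π y)) ^ 2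
        = (Pt t x y - π y)^2 / π y := by
      intro y _
      rw [div_pow, sq_abs, Real.sq_sqrt (hπpos y).le]
    rw [hs1, one_mul, Finset.sum_congr rfl hs2] at cs
    have hchi : ∑ y, (Pt t x y - π y)^2 / π y = Pt (t+t) x x / π x - 1 := by
      have term : ∀ y ∈ Finset.univ, (Pt t x y - π y)^2 / π y
          = Pt t x y * Pt t y x / π x - 2 * Pt t x y + π y := by
        intro y _
        have h1 : Pt t x y^2 / π y = Pt t x y * Pt t y x / π x := by
          rw [div_eq_div_iff (hπpos y).ne' (hπpos x).ne']
          linear_combination Pt t x y * (hrev t x y)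
        have h2 : (Pt t x y - π y)^2/π y = Pt t x y^2/π y - 2*Pt t x y + π y := by
          field_simp [(hπpos y).ne']
          ring
        rw [h2, h1]
      rw [Finset.sum_congr rfl term]
      rw [Finset.sum_add_distrib, Finset.sum_sub_distrib]
      rw [← Finset.sum_div, ← hCh t t x x, ← Finset.mul_sum, hPtrow, hπsum]
      ring
    rw [hchi] at cs
    exact cs
  -- combine everything
  have hT : (1:ℝ) ≤ (t:ℝ) := by exact_mod_cast ht
  have hT0 : (0:ℝ) < 2 * (t:ℝ) := by linarith
  have hsum2t : (2 * (t:ℝ)) * (Pt (t+t) x x - π x)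
      ≤ ∑ s ∈ Finset.range (t+t), (Pt s x x - π x) := by
    have hcard : ((t+t : ℕ) : ℝ) = 2 * (t:ℝ) := by push_cast; ring
    have := Finset.card_nsmul_le_sum (Finset.range (t+t))
      (fun s => Pt s x x - π x) (Pt (t+t) x x - π x)
      (fun s hs => by
        have hsle : s ≤ t + t := le_of_lt (Finset.mem_range.mp hs)
        simpa using sub_le_sub_right (hmono s (t+t) hsle) (π x))
    rw [Finset.card_range, nsmul_eq_mul, hcard] at this
    exact this
  have hMg : π x * g (t+t) ≤ π x * M := mul_le_mul_of_nonneg_left (hgle (t+t)) hπx.le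
  have e1 : (Pt (t+t) x x - π x) / π x ≤ M / (2 * (t:ℝ)) := by
    rw [div_le_div_iff₀ hπx hT0]
    have := hgtel (t+t)
    nlinarith [hsum2t, hMg]
  have e2 : Pt (t+t) x x / π x - 1 = (Pt (t+t) x x - π x) / π x := by
    field_simp
  have hS0 : (0:ℝ) ≤ ∑ y, |Pt t x y - π y| :=
    Finset.sum_nonneg fun y _ => abs_nonneg _
  calc ((1:ℝ) / 2 * ∑ y, |Pt t x y - π y|) ^ 2
      = (∑ y, |Pt t x y - π y|) ^ 2 / 4 := by ring
    _ ≤ (M / (2 * (t:ℝ))) / 4 := by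
        rw [e2] at hsq
        linarith [hsq, e1]
    _ = 1 / (8 * (t:ℝ)) * M := by
        rw [div_div]
        rw [show (2 * (t:ℝ)) * 4 = 8 * (t:ℝ) by ring]
        rw [div_eq_mul_inv, one_div, mul_comm]
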